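/- Let 𝓔 be a locally finite subset of [0,∞) with weight function ω : 𝓔 → (0,∞), and write ω̃(t) = Σ_{x∈𝓔, x≤t} ω(x). Suppose there are constants c, δ > 0 and α ∈ ℝ with ω̃(t) ~ c t^α e^{δt} as t → ∞. For N ∈ ℕ let 𝓡_N = Σ_{x,y∈𝓔, x≤N, y≤N} ω(x)ω(y) Δ_{y-x} (a finite measure on ℝ, where Δ_z is the Dirac mass at z). Then as N → ∞, the measures (1/ω̃(N)²) 𝓡_N converge weak-star to the measure (δ/2) e^{-δ|t|} dt on ℝ. -/

import Mathlib

set_option linter.unusedVariables false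
set_option linter.unusedSectionVars false
set_option maxHeartbeats 1000000
open Filter Real MeasureTheory Set

namespace PCPA

variable {E : Set ℝ} (hfin : ∀ t : ℝ, (E ∩ Set.Iic t).Finite) (ω : ℝ → ℝ)

/-- cumulative weight -/
noncomputable def Wf (t : ℝ) : ℝ := ∑ x ∈ (hfin t).toFinset, ω x

lemma mem_Ff {t x : ℝ} : x ∈ (hfin t).toFinset ↔ x ∈ E ∧ x ≤ t := by
  simp [Set.Finite.mem_toFinset]

lemma Ff_mono {s t : ℝ} (hst : s ≤ t) : (hfin s).toFinset ⊆ (hfin t).toFinset := by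
  intro x hx; rw [mem_Ff] at hx ⊢; exact ⟨hx.1, hx.2.trans hst⟩

lemma Ff_filter (t a : ℝ) :
    (hfin t).toFinset.filter (fun y => y ≤ a) = (hfin (min a t)).toFinset := by
  ext y
  simp only [Finset.mem_filter, mem_Ff, le_min_iff]
  tauto

variable (hω : ∀ x ∈ E, 0 < ω x)

include hω in
lemma omega_nonneg {t x : ℝ} (hx : x ∈ (hfin t).toFinset) : 0 ≤ ω x :=
  (hω x ((mem_Ff hfin).1 hx).1).le

include hω in
lemma Wf_nonneg (t : ℝ) : 0 ≤ Wf hfin ω t :=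
  Finset.sum_nonneg fun x hx => omega_nonneg hfin ω hω hx

include hω in
lemma Wf_mono {s t : ℝ} (hst : s ≤ t) : Wf hfin ω s ≤ Wf hfin ω t :=
  Finset.sum_le_sum_of_subset_of_nonneg (Ff_mono hfin hst)
    (fun x hx _ => omega_nonneg hfin ω hω hx)

include hω in
lemma le_Wf {x t : ℝ} (hx : x ∈ E) (hxt : x ≤ t) : ω x ≤ Wf hfin ω t :=
  Finset.single_le_sum (fun y hy => omega_nonneg hfin ω hω hy)
    ((mem_Ff hfin).2 ⟨hx, hxt⟩)

lemma sum_sdiff_Ff {s t : ℝ} (hst : s ≤ t) :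
    ∑ x ∈ (hfin t).toFinset \ (hfin s).toFinset, ω x = Wf hfin ω t - Wf hfin ω s :=
  Finset.sum_sdiff_eq_sub (Ff_mono hfin hst)

/-- helper: tendsto from eventual epsilon bounds -/
lemma tendsto_of_eps {f : ℝ → ℝ} {c : ℝ}
    (h : ∀ ε > (0:ℝ), ∀ᶠ t in atTop, |f t - c| ≤ ε) : Tendsto f atTop (nhds c) := by
  rw [Metric.tendsto_nhds]
  intro ε hε
  filter_upwards [h (ε/2) (by linarith)] with t ht
  rw [Real.dist_eq]; linarith

section PA
variable {c δ α : ℝ} (hc : 0 < c) (hδ : 0 < δ)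
  (hPA : Tendsto (fun t : ℝ => Wf hfin ω t / (c * t ^ α * Real.exp (δ * t)))
    atTop (nhds 1))

include hc in
lemma phi_pos : ∀ᶠ t : ℝ in atTop, 0 < c * t ^ α * Real.exp (δ * t) := by
  filter_upwards [eventually_gt_atTop (0:ℝ)] with t ht
  exact mul_pos (mul_pos hc (Real.rpow_pos_of_pos ht α)) (Real.exp_pos _)

include hc hPA in
lemma Wf_pos : ∀ᶠ t in atTop, 0 < Wf hfin ω t := by
  have h := hPA.eventually (eventually_gt_nhds (by norm_num : (1:ℝ)/2 < 1))
  filter_upwards [h, phi_pos (δ := δ) (α := α) hc] with t h1 hp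
  rcases div_pos_iff.mp (lt_trans one_half_pos h1) with ⟨hW, _⟩ | ⟨_, hφ⟩
  · exact hW
  · linarith

include hc in
lemma phi_ratio (s : ℝ) :
    Tendsto (fun t : ℝ => (c * (t+s) ^ α * Real.exp (δ * (t+s))) / (c * t ^ α * Real.exp (δ * t)))
      atTop (nhds (Real.exp (δ * s))) := by
  have h0 : Tendsto (fun t : ℝ => (t+s)/t) atTop (nhds 1) := by
    have h : Tendsto (fun t : ℝ => 1 + s/t) atTop (nhds (1+0)) :=
      tendsto_const_nhds.add (tendsto_const_nhds.div_atTop tendsto_id)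
    rw [add_zero] at h
    apply h.congr'
    filter_upwards [eventually_gt_atTop (0:ℝ)] with t ht
    field_simp
  have h1 : Tendsto (fun t : ℝ => ((t+s)/t) ^ α) atTop (nhds 1) := by
    have := (Real.continuousAt_rpow_const 1 α (Or.inl one_ne_zero)).tendsto.comp h0
    simpa [Function.comp_def] using this
  have h2 : Tendsto (fun t : ℝ => ((t+s)/t) ^ α * Real.exp (δ * s)) atTop
      (nhds (Real.exp (δ * s))) := by
    simpa using h1.mul_const (Real.exp (δ * s))
  apply h2.congr'
  filter_upwards [eventually_gt_atTop (max 0 (-s))] with t ht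
  have ht0 : 0 < t := lt_of_le_of_lt (le_max_left _ _) ht
  have hts : 0 < t + s := by have := lt_of_le_of_lt (le_max_right _ _) ht; linarith
  rw [Real.div_rpow hts.le ht0.le]
  rw [show δ * (t+s) = δ * t + δ * s by ring, Real.exp_add]
  have hne1 : t ^ α ≠ 0 := ne_of_gt (Real.rpow_pos_of_pos ht0 α)
  have hne2 : Real.exp (δ * t) ≠ 0 := Real.exp_ne_zero _
  field_simp

include hc hPA in
lemma Wf_ratio (s : ℝ) :
    Tendsto (fun t => Wf hfin ω (t + s) / Wf hfin ω t) atTop (nhds (Real.exp (δ * s))) := by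
  have hshift : Tendsto (fun t : ℝ => t + s) atTop atTop :=
    tendsto_atTop_add_const_right _ s tendsto_id
  have h1 : Tendsto (fun t => Wf hfin ω (t+s) / (c * (t+s) ^ α * Real.exp (δ * (t+s))))
      atTop (nhds 1) := hPA.comp hshift
  have h2 : Tendsto (fun t : ℝ => (c * t ^ α * Real.exp (δ * t)) / Wf hfin ω t)
      atTop (nhds 1) := by
    have := hPA.inv₀ one_ne_zero
    simp only [inv_div, inv_one] at this
    exact this
  have h3 := phi_ratio (δ := δ) (α := α) hc s
  have h4 := (h1.mul h3).mul h2
  rw [show (1 : ℝ) * Real.exp (δ * s) * 1 = Real.exp (δ * s) by ring] at h4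
  apply h4.congr'
  filter_upwards [phi_pos (δ := δ) (α := α) hc,
    hshift.eventually (phi_pos (δ := δ) (α := α) hc),
    Wf_pos hfin ω hc hPA] with t hp1 hp2 hW
  have ha1 : (t + s) ^ α ≠ 0 := fun h => by rw [h] at hp2; simp at hp2
  have ha2 : t ^ α ≠ 0 := fun h => by rw [h] at hp1; simp at hp1
  field_simp

include hc hδ hPA in
lemma Wf_atTop : Tendsto (Wf hfin ω) atTop atTop := by
  have hlog : Tendsto (fun t : ℝ => α * (Real.log t / t) + δ) atTop (nhds (α * 0 + δ)) :=
    (tendsto_const_nhds.mul (Real.isLittleO_log_id_atTop.tendsto_div_nhds_zero)).add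
      tendsto_const_nhds
  rw [mul_zero, zero_add] at hlog
  have h2 : Tendsto (fun t : ℝ => t * (α * (Real.log t / t) + δ)) atTop atTop :=
    tendsto_id.atTop_mul_pos hδ hlog
  have h3 : Tendsto (fun t : ℝ => c * Real.exp (t * (α * (Real.log t / t) + δ))) atTop atTop :=
    (Real.tendsto_exp_atTop.comp h2).const_mul_atTop hc
  have hphi : Tendsto (fun t : ℝ => c * t ^ α * Real.exp (δ * t)) atTop atTop := by
    apply h3.congr'
    filter_upwards [eventually_gt_atTop (0:ℝ)] with t ht
    rw [Real.rpow_def_of_pos ht]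
    rw [show t * (α * (Real.log t / t) + δ) = Real.log t * α + δ * t by field_simp]
    rw [Real.exp_add]
    ring
  have hW2 : ∀ᶠ t in atTop, (c * t ^ α * Real.exp (δ * t))/2 ≤ Wf hfin ω t := by
    have h := hPA.eventually (eventually_gt_nhds (by norm_num : (1:ℝ)/2 < 1))
    filter_upwards [h, phi_pos (δ := δ) (α := α) hc] with t h1 hp
    have h3 : 1/2 * (c * t ^ α * Real.exp (δ * t)) < Wf hfin ω t := (lt_div_iff₀ hp).mp h1
    linarith
  exact tendsto_atTop_mono' _ hW2 (hphi.atTop_div_const two_pos)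

include hc hδ hPA in
lemma const_div_Wf_sq (r : ℝ) :
    Tendsto (fun t => r / (Wf hfin ω t)^2) atTop (nhds 0) := by
  have h := Wf_atTop hfin ω hc hδ hPA
  have h2 : Tendsto (fun t => (Wf hfin ω t)^2) atTop atTop := by
    simpa [pow_two] using h.atTop_mul_atTop₀ h
  exact tendsto_const_nhds.div_atTop h2

end PA


noncomputable def Df (t : ℝ) : ℝ := ∑ x ∈ (hfin t).toFinset, (ω x)^2

noncomputable def SA (t : ℝ) : ℝ := ∑ x ∈ (hfin t).toFinset, ω x * Wf hfin ω x

noncomputable def HH (t u : ℝ) : ℝ :=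
  ∑ x ∈ (hfin t).toFinset, ∑ y ∈ (hfin t).toFinset,
    ω x * ω y * (if y - x ≤ u then 1 else 0)

noncomputable def HHs (t u : ℝ) : ℝ :=
  ∑ x ∈ (hfin t).toFinset, ∑ y ∈ (hfin t).toFinset,
    ω x * ω y * (if y - x < u then 1 else 0)

lemma Wf_sq (t : ℝ) :
    (Wf hfin ω t)^2 = ∑ x ∈ (hfin t).toFinset, ∑ y ∈ (hfin t).toFinset, ω x * ω y := by
  rw [pow_two, Wf, Finset.sum_mul_sum]

lemma two_SA (t : ℝ) : 2 * SA hfin ω t = (Wf hfin ω t)^2 + Df hfin ω t := by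
  classical
  have hA : (∑ x ∈ (hfin t).toFinset, ∑ y ∈ (hfin t).toFinset,
      if y ≤ x then ω x * ω y else 0) = SA hfin ω t := by
    apply Finset.sum_congr rfl
    intro x hx
    have hxt : x ≤ t := ((mem_Ff hfin).1 hx).2
    rw [← Finset.sum_filter, Ff_filter, min_eq_left hxt, Wf, Finset.mul_sum]
  have hA' : (∑ y ∈ (hfin t).toFinset, ∑ x ∈ (hfin t).toFinset,
      if x ≤ y then ω x * ω y else 0) = SA hfin ω t := by
    apply Finset.sum_congr rfl
    intro y hy
    have hyt : y ≤ t := ((mem_Ff hfin).1 hy).2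
    rw [← Finset.sum_filter, Ff_filter, min_eq_left hyt, Wf, Finset.mul_sum]
    apply Finset.sum_congr rfl
    intro x _
    ring
  have hD : (∑ y ∈ (hfin t).toFinset, ∑ x ∈ (hfin t).toFinset,
      if x = y then ω x * ω y else 0) = Df hfin ω t := by
    apply Finset.sum_congr rfl
    intro y hy
    rw [Finset.sum_ite_eq' ((hfin t).toFinset) y (fun x => ω x * ω y), if_pos hy, pow_two]
  have hsplit : (Wf hfin ω t)^2 =
      (∑ x ∈ (hfin t).toFinset, ∑ y ∈ (hfin t).toFinset, if y ≤ x then ω x * ω y else 0)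
      + (∑ x ∈ (hfin t).toFinset, ∑ y ∈ (hfin t).toFinset, if x < y then ω x * ω y else 0) := by
    rw [Wf_sq, ← Finset.sum_add_distrib]
    apply Finset.sum_congr rfl; intro x _
    rw [← Finset.sum_add_distrib]
    apply Finset.sum_congr rfl; intro y _
    by_cases h : y ≤ x
    · rw [if_pos h, if_neg (not_lt.2 h), add_zero]
    · rw [if_neg h, if_pos (lt_of_not_ge h), zero_add]
  have hB : (∑ x ∈ (hfin t).toFinset, ∑ y ∈ (hfin t).toFinset,
      if x < y then ω x * ω y else 0) = SA hfin ω t - Df hfin ω t := by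
    rw [Finset.sum_comm]
    have : ∀ y ∈ (hfin t).toFinset, ∀ x ∈ (hfin t).toFinset,
        (if x < y then ω x * ω y else 0) =
        (if x ≤ y then ω x * ω y else 0) - (if x = y then ω x * ω y else 0) := by
      intro y _ x _
      rcases lt_trichotomy x y with h | h | h
      · rw [if_pos h, if_pos h.le, if_neg h.ne, sub_zero]
      · subst h; simp
      · rw [if_neg (not_lt.2 h.le), if_neg (not_le.2 h), if_neg (ne_of_gt h)]; ring
    calc (∑ y ∈ (hfin t).toFinset, ∑ x ∈ (hfin t).toFinset, if x < y then ω x * ω y else 0)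
        = ∑ y ∈ (hfin t).toFinset, ((∑ x ∈ (hfin t).toFinset, if x ≤ y then ω x * ω y else 0)
          - (∑ x ∈ (hfin t).toFinset, if x = y then ω x * ω y else 0)) := by
          apply Finset.sum_congr rfl; intro y hy
          rw [← Finset.sum_sub_distrib]
          exact Finset.sum_congr rfl (fun x hx => this y hy x hx)
      _ = SA hfin ω t - Df hfin ω t := by
          rw [Finset.sum_sub_distrib, hA', hD]
  have := hsplit
  rw [hA, hB] at this
  linarith

lemma HH_eq (t u : ℝ) :
    HH hfin ω t u = ∑ x ∈ (hfin t).toFinset, ω x * Wf hfin ω (min (x + u) t) := by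
  classical
  apply Finset.sum_congr rfl
  intro x hx
  have h1 : ∀ y, ω x * ω y * (if y - x ≤ u then (1:ℝ) else 0)
      = (if y ≤ x + u then ω x * ω y else 0) := by
    intro y
    by_cases h : y - x ≤ u
    · rw [if_pos h, if_pos (by linarith), mul_one]
    · rw [if_neg h, if_neg (by intro hy; exact h (by linarith)), mul_zero]
  calc (∑ y ∈ (hfin t).toFinset, ω x * ω y * (if y - x ≤ u then 1 else 0))
      = ∑ y ∈ (hfin t).toFinset, (if y ≤ x + u then ω x * ω y else 0) :=
        Finset.sum_congr rfl (fun y _ => h1 y)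
    _ = ω x * Wf hfin ω (min (x + u) t) := by
        rw [← Finset.sum_filter, Ff_filter, Wf, Finset.mul_sum]

lemma HH_compl (t u : ℝ) :
    HH hfin ω t u + HHs hfin ω t (-u) = (Wf hfin ω t)^2 := by
  classical
  have hswap : HHs hfin ω t (-u) = ∑ x ∈ (hfin t).toFinset, ∑ y ∈ (hfin t).toFinset,
      ω x * ω y * (if x - y < -u then 1 else 0) := by
    rw [HHs, Finset.sum_comm]
    apply Finset.sum_congr rfl; intro y _
    apply Finset.sum_congr rfl; intro x _
    ring
  rw [hswap, Wf_sq, HH, ← Finset.sum_add_distrib]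
  apply Finset.sum_congr rfl; intro x _
  rw [← Finset.sum_add_distrib]
  apply Finset.sum_congr rfl; intro y _
  by_cases h : y - x ≤ u
  · rw [if_pos h, if_neg (by linarith)]; ring
  · rw [if_neg h, if_pos (by push_neg at h; linarith)]; ring

include hω in
lemma HHs_le (t u : ℝ) : HHs hfin ω t u ≤ HH hfin ω t u := by
  apply Finset.sum_le_sum; intro x hx
  apply Finset.sum_le_sum; intro y hy
  have hnn : 0 ≤ ω x * ω y :=
    mul_nonneg (omega_nonneg hfin ω hω hx) (omega_nonneg hfin ω hω hy)
  by_cases h : y - x < u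
  · rw [if_pos h, if_pos h.le]
  · rw [if_neg h, mul_zero]
    positivity

include hω in
lemma le_HHs (t u e : ℝ) (he : 0 < e) : HH hfin ω t (u - e) ≤ HHs hfin ω t u := by
  apply Finset.sum_le_sum; intro x hx
  apply Finset.sum_le_sum; intro y hy
  have hnn : 0 ≤ ω x * ω y :=
    mul_nonneg (omega_nonneg hfin ω hω hx) (omega_nonneg hfin ω hω hy)
  by_cases h : y - x ≤ u - e
  · rw [if_pos h, if_pos (by linarith)]
  · rw [if_neg h, mul_zero]
    positivity


section Main
variable {c δ α : ℝ} (hω : ∀ x ∈ E, 0 < ω x) (hc : 0 < c) (hδ : 0 < δ)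
  (hPA : Tendsto (fun t : ℝ => Wf hfin ω t / (c * t ^ α * Real.exp (δ * t)))
    atTop (nhds 1))

include hω hc hδ hPA in
lemma Df_div : Tendsto (fun t => Df hfin ω t / (Wf hfin ω t)^2) atTop (nhds 0) := by
  classical
  apply tendsto_of_eps
  intro ε hε
  set s' : ℝ := ε/(8*δ) with hs'def
  have hs' : 0 < s' := by positivity
  have hδs' : δ * s' = ε/8 := by rw [hs'def]; field_simp
  have h1e : 1 - Real.exp (δ * (-s')) ≤ ε/8 := by
    have h := Real.add_one_le_exp (δ * (-s'))
    have : δ * (-s') = -(ε/8) := by rw [mul_neg, hδs']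
    rw [this] at h ⊢
    linarith
  have hexp_pos : (0:ℝ) < Real.exp (δ * (-s')) := Real.exp_pos _
  have hrat := Wf_ratio hfin ω hc hPA (-s')
  have h2 := hrat.eventually (eventually_ge_nhds
    (show Real.exp (δ*(-s')) - ε/8 < Real.exp (δ*(-s')) by linarith))
  have h3 := Wf_pos hfin ω hc hPA
  obtain ⟨T₀, hT₀⟩ := (eventually_atTop).1 (h2.and h3)
  have hT₀' : ∀ x ≥ T₀, 0 < Wf hfin ω x ∧
      (Real.exp (δ * (-s')) - ε/8) * Wf hfin ω x ≤ Wf hfin ω (x - s') := by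
    intro x hx
    obtain ⟨ha, hb⟩ := hT₀ x hx
    refine ⟨hb, ?_⟩
    rw [show x + (-s') = x - s' by ring] at ha
    calc (Real.exp (δ * (-s')) - ε/8) * Wf hfin ω x
        ≤ (Wf hfin ω (x - s') / Wf hfin ω x) * Wf hfin ω x := by
          apply mul_le_mul_of_nonneg_right ha hb.le
      _ = Wf hfin ω (x - s') := by field_simp
  have hconst := const_div_Wf_sq hfin ω hc hδ hPA ((Wf hfin ω T₀)^2)
  have hc2 := hconst.eventually (eventually_le_nhds (show (0:ℝ) < ε/4 by linarith))
  filter_upwards [eventually_ge_atTop T₀, h3, hc2] with t ht2 hWt hcc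
  have hWt2 : (0:ℝ) < (Wf hfin ω t)^2 := by positivity
  -- head bound
  have hhead : ∑ x ∈ (hfin T₀).toFinset, (ω x)^2 ≤ (Wf hfin ω T₀)^2 := by
    rw [pow_two]
    calc ∑ x ∈ (hfin T₀).toFinset, (ω x)^2
        ≤ ∑ x ∈ (hfin T₀).toFinset, ω x * Wf hfin ω T₀ := by
          apply Finset.sum_le_sum
          intro x hx
          rw [pow_two]
          exact mul_le_mul_of_nonneg_left
            (le_Wf hfin ω hω ((mem_Ff hfin).1 hx).1 ((mem_Ff hfin).1 hx).2)
            (omega_nonneg hfin ω hω hx)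
      _ = Wf hfin ω T₀ * Wf hfin ω T₀ := by rw [← Finset.sum_mul, Wf]
  -- tail bound
  have htail : ∑ x ∈ (hfin t).toFinset \ (hfin T₀).toFinset, (ω x)^2
      ≤ (ε/4) * (Wf hfin ω t)^2 := by
    have hterm : ∀ x ∈ (hfin t).toFinset \ (hfin T₀).toFinset,
        (ω x)^2 ≤ ω x * ((ε/4) * Wf hfin ω t) := by
      intro x hx
      rw [Finset.mem_sdiff, mem_Ff, mem_Ff] at hx
      obtain ⟨⟨hxE, hxt⟩, hxn⟩ := hx
      have hxT₀ : T₀ ≤ x := by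
        by_contra hcon
        exact hxn ⟨hxE, (not_le.1 hcon).le⟩
      obtain ⟨hWx, hratx⟩ := hT₀' x hxT₀
      have hmem : x ∈ (hfin x).toFinset \ (hfin (x - s')).toFinset := by
        rw [Finset.mem_sdiff, mem_Ff, mem_Ff]
        exact ⟨⟨hxE, le_refl x⟩, fun h => by linarith [h.2]⟩
      have hω_le : ω x ≤ Wf hfin ω x - Wf hfin ω (x - s') := by
        rw [← sum_sdiff_Ff hfin ω (show x - s' ≤ x by linarith)]
        exact Finset.single_le_sum (fun y hy => omega_nonneg hfin ω hω (Finset.mem_sdiff.1 hy).1) hmem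
      have hω_le2 : ω x ≤ (ε/4) * Wf hfin ω t := by
        have h5 : Wf hfin ω x - Wf hfin ω (x - s') ≤
            (1 - Real.exp (δ * (-s')) + ε/8) * Wf hfin ω x := by nlinarith
        have h6 : (1 - Real.exp (δ * (-s')) + ε/8) * Wf hfin ω x ≤ (ε/4) * Wf hfin ω x := by
          apply mul_le_mul_of_nonneg_right _ hWx.le
          linarith
        have h7 : (ε/4) * Wf hfin ω x ≤ (ε/4) * Wf hfin ω t :=
          mul_le_mul_of_nonneg_left (Wf_mono hfin ω hω hxt) (by linarith)
        linarith
      rw [pow_two]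
      exact mul_le_mul_of_nonneg_left hω_le2 (hω x hxE).le
    calc ∑ x ∈ (hfin t).toFinset \ (hfin T₀).toFinset, (ω x)^2
        ≤ ∑ x ∈ (hfin t).toFinset \ (hfin T₀).toFinset, ω x * ((ε/4) * Wf hfin ω t) :=
          Finset.sum_le_sum hterm
      _ = (Wf hfin ω t - Wf hfin ω T₀) * ((ε/4) * Wf hfin ω t) := by
          rw [← Finset.sum_mul, sum_sdiff_Ff hfin ω ht2]
      _ ≤ (ε/4) * (Wf hfin ω t)^2 := by
          have hT₀nn : 0 ≤ Wf hfin ω T₀ := Wf_nonneg hfin ω hω T₀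
          nlinarith [mul_nonneg hT₀nn hWt.le, hε.le]
  have hsplit : Df hfin ω t = (∑ x ∈ (hfin T₀).toFinset, (ω x)^2)
      + ∑ x ∈ (hfin t).toFinset \ (hfin T₀).toFinset, (ω x)^2 := by
    rw [Df, ← Finset.sum_sdiff (Ff_mono hfin ht2)]
    ring
  have hDnn : 0 ≤ Df hfin ω t := Finset.sum_nonneg (fun x hx => sq_nonneg _)
  have hfinal : Df hfin ω t ≤ (ε/4) * (Wf hfin ω t)^2 + (ε/4) * (Wf hfin ω t)^2 := by
    rw [hsplit]
    have : (Wf hfin ω T₀)^2 ≤ (ε/4) * (Wf hfin ω t)^2 := by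
      have := hcc
      rwa [div_le_iff₀ hWt2] at this
    linarith
  rw [sub_zero, abs_of_nonneg (div_nonneg hDnn hWt2.le), div_le_iff₀ hWt2]
  nlinarith


include hω in
lemma HH_sandwich {t u η T₀ : ℝ} (hu : 0 ≤ u) (hη : 0 ≤ η)
    (hηe : 0 ≤ Real.exp (δ*u) - η)
    (hT₀ : ∀ x ≥ T₀, (Real.exp (δ*u) - η) * Wf hfin ω x ≤ Wf hfin ω (x+u) ∧
      Wf hfin ω (x+u) ≤ (Real.exp (δ*u) + η) * Wf hfin ω x)
    (ht : T₀ + u ≤ t) :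
    (Real.exp (δ*u) - η) * (SA hfin ω (t-u) - (Wf hfin ω T₀)^2)
        + Wf hfin ω t * (Wf hfin ω t - Wf hfin ω (t-u)) ≤ HH hfin ω t u ∧
    HH hfin ω t u ≤ (Real.exp (δ*u) + η) * SA hfin ω (t-u)
        + Wf hfin ω T₀ * Wf hfin ω (T₀+u)
        + Wf hfin ω t * (Wf hfin ω t - Wf hfin ω (t-u)) := by
  classical
  have hT0t : T₀ ≤ t - u := by linarith
  have htu : t - u ≤ t := by linarith
  have hs : (∑ x ∈ (hfin t).toFinset \ (hfin (t-u)).toFinset, ω x * Wf hfin ω (min (x+u) t))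
      + ∑ x ∈ (hfin (t-u)).toFinset, ω x * Wf hfin ω (min (x+u) t)
      = ∑ x ∈ (hfin t).toFinset, ω x * Wf hfin ω (min (x+u) t) :=
    Finset.sum_sdiff (Ff_mono hfin htu)
  have h1 : ∑ x ∈ (hfin (t-u)).toFinset, ω x * Wf hfin ω (min (x+u) t)
      = ∑ x ∈ (hfin (t-u)).toFinset, ω x * Wf hfin ω (x+u) := by
    apply Finset.sum_congr rfl; intro x hx
    have hx2 : x ≤ t - u := ((mem_Ff hfin).1 hx).2
    rw [min_eq_left (by linarith)]
  have h2 : ∑ x ∈ (hfin t).toFinset \ (hfin (t-u)).toFinset, ω x * Wf hfin ω (min (x+u) t)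
      = Wf hfin ω t * (Wf hfin ω t - Wf hfin ω (t-u)) := by
    have : ∀ x ∈ (hfin t).toFinset \ (hfin (t-u)).toFinset,
        ω x * Wf hfin ω (min (x+u) t) = ω x * Wf hfin ω t := by
      intro x hx
      rw [Finset.mem_sdiff, mem_Ff, mem_Ff] at hx
      have : ¬ (x ≤ t - u) := fun h => hx.2 ⟨hx.1.1, h⟩
      rw [min_eq_right (by linarith)]
    rw [Finset.sum_congr rfl this, ← Finset.sum_mul, sum_sdiff_Ff hfin ω htu, mul_comm]
  have hG : HH hfin ω t u = (∑ x ∈ (hfin (t-u)).toFinset, ω x * Wf hfin ω (x+u))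
      + Wf hfin ω t * (Wf hfin ω t - Wf hfin ω (t-u)) := by
    rw [HH_eq, ← hs, h1, h2]; ring
  have hGsplit : (∑ x ∈ (hfin (t-u)).toFinset \ (hfin T₀).toFinset, ω x * Wf hfin ω (x+u))
      + ∑ x ∈ (hfin T₀).toFinset, ω x * Wf hfin ω (x+u)
      = ∑ x ∈ (hfin (t-u)).toFinset, ω x * Wf hfin ω (x+u) :=
    Finset.sum_sdiff (Ff_mono hfin hT0t)
  have hSAsplit : (∑ x ∈ (hfin (t-u)).toFinset \ (hfin T₀).toFinset, ω x * Wf hfin ω x)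
      + ∑ x ∈ (hfin T₀).toFinset, ω x * Wf hfin ω x
      = SA hfin ω (t-u) :=
    Finset.sum_sdiff (Ff_mono hfin hT0t)
  have hωnn : ∀ {r : ℝ} {x : ℝ}, x ∈ (hfin r).toFinset → 0 ≤ ω x :=
    fun {r x} hx => omega_nonneg hfin ω hω hx
  have hhead_ub : ∑ x ∈ (hfin T₀).toFinset, ω x * Wf hfin ω (x+u)
      ≤ Wf hfin ω T₀ * Wf hfin ω (T₀+u) := by
    calc ∑ x ∈ (hfin T₀).toFinset, ω x * Wf hfin ω (x+u)
        ≤ ∑ x ∈ (hfin T₀).toFinset, ω x * Wf hfin ω (T₀+u) := by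
          apply Finset.sum_le_sum; intro x hx
          exact mul_le_mul_of_nonneg_left
            (Wf_mono hfin ω hω (by linarith [((mem_Ff hfin).1 hx).2] : x + u ≤ T₀ + u)) (hωnn hx)
      _ = Wf hfin ω T₀ * Wf hfin ω (T₀+u) := by rw [← Finset.sum_mul]; rfl
  have hhead_nn : 0 ≤ ∑ x ∈ (hfin T₀).toFinset, ω x * Wf hfin ω (x+u) :=
    Finset.sum_nonneg fun x hx => mul_nonneg (hωnn hx) (Wf_nonneg hfin ω hω _)
  have hSAhead_ub : ∑ x ∈ (hfin T₀).toFinset, ω x * Wf hfin ω x ≤ (Wf hfin ω T₀)^2 := by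
    rw [pow_two]
    calc ∑ x ∈ (hfin T₀).toFinset, ω x * Wf hfin ω x
        ≤ ∑ x ∈ (hfin T₀).toFinset, ω x * Wf hfin ω T₀ := by
          apply Finset.sum_le_sum; intro x hx
          exact mul_le_mul_of_nonneg_left (Wf_mono hfin ω hω ((mem_Ff hfin).1 hx).2) (hωnn hx)
      _ = Wf hfin ω T₀ * Wf hfin ω T₀ := by rw [← Finset.sum_mul]; rfl
  have hSAhead_nn : 0 ≤ ∑ x ∈ (hfin T₀).toFinset, ω x * Wf hfin ω x :=
    Finset.sum_nonneg fun x hx => mul_nonneg (hωnn hx) (Wf_nonneg hfin ω hω _)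
  have hmemT₀ : ∀ x ∈ (hfin (t-u)).toFinset \ (hfin T₀).toFinset, T₀ ≤ x := by
    intro x hx
    rw [Finset.mem_sdiff, mem_Ff, mem_Ff] at hx
    by_contra hcon
    exact hx.2 ⟨hx.1.1, (not_le.1 hcon).le⟩
  have htail_lb : (Real.exp (δ*u) - η) *
      (SA hfin ω (t-u) - ∑ x ∈ (hfin T₀).toFinset, ω x * Wf hfin ω x)
      ≤ ∑ x ∈ (hfin (t-u)).toFinset \ (hfin T₀).toFinset, ω x * Wf hfin ω (x+u) := by
    have heq : SA hfin ω (t-u) - (∑ x ∈ (hfin T₀).toFinset, ω x * Wf hfin ω x)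
        = ∑ x ∈ (hfin (t-u)).toFinset \ (hfin T₀).toFinset, ω x * Wf hfin ω x :=
      sub_eq_iff_eq_add.2 hSAsplit.symm
    rw [heq, Finset.mul_sum]
    apply Finset.sum_le_sum; intro x hx
    have h3 := (hT₀ x (hmemT₀ x hx)).1
    have h4 : 0 ≤ ω x := hωnn (Finset.mem_sdiff.1 hx).1
    calc (Real.exp (δ*u) - η) * (ω x * Wf hfin ω x)
        = ω x * ((Real.exp (δ*u) - η) * Wf hfin ω x) := by ring
      _ ≤ ω x * Wf hfin ω (x+u) := mul_le_mul_of_nonneg_left h3 h4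
  have htail_ub : ∑ x ∈ (hfin (t-u)).toFinset \ (hfin T₀).toFinset, ω x * Wf hfin ω (x+u)
      ≤ (Real.exp (δ*u) + η) *
      (SA hfin ω (t-u) - ∑ x ∈ (hfin T₀).toFinset, ω x * Wf hfin ω x) := by
    have heq : SA hfin ω (t-u) - (∑ x ∈ (hfin T₀).toFinset, ω x * Wf hfin ω x)
        = ∑ x ∈ (hfin (t-u)).toFinset \ (hfin T₀).toFinset, ω x * Wf hfin ω x :=
      sub_eq_iff_eq_add.2 hSAsplit.symm
    rw [heq, Finset.mul_sum]
    apply Finset.sum_le_sum; intro x hx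
    have h3 := (hT₀ x (hmemT₀ x hx)).2
    have h4 : 0 ≤ ω x := hωnn (Finset.mem_sdiff.1 hx).1
    calc ω x * Wf hfin ω (x+u)
        ≤ ω x * ((Real.exp (δ*u) + η) * Wf hfin ω x) := mul_le_mul_of_nonneg_left h3 h4
      _ = (Real.exp (δ*u) + η) * (ω x * Wf hfin ω x) := by ring
  have hG_lb : (Real.exp (δ*u) - η) * (SA hfin ω (t-u) - (Wf hfin ω T₀)^2)
      ≤ ∑ x ∈ (hfin (t-u)).toFinset, ω x * Wf hfin ω (x+u) := by
    have h5 : (Real.exp (δ*u) - η) * (SA hfin ω (t-u) - (Wf hfin ω T₀)^2)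
        ≤ (Real.exp (δ*u) - η) *
          (SA hfin ω (t-u) - ∑ x ∈ (hfin T₀).toFinset, ω x * Wf hfin ω x) := by
      apply mul_le_mul_of_nonneg_left _ hηe
      linarith
    rw [← hGsplit]
    linarith [htail_lb, hhead_nn]
  have hG_ub : ∑ x ∈ (hfin (t-u)).toFinset, ω x * Wf hfin ω (x+u)
      ≤ (Real.exp (δ*u) + η) * SA hfin ω (t-u) + Wf hfin ω T₀ * Wf hfin ω (T₀+u) := by
    have h6 : (Real.exp (δ*u) + η) *
        (SA hfin ω (t-u) - ∑ x ∈ (hfin T₀).toFinset, ω x * Wf hfin ω x)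
        ≤ (Real.exp (δ*u) + η) * SA hfin ω (t-u) := by
      have h7 : 0 ≤ Real.exp (δ*u) + η := by linarith
      nlinarith [mul_nonneg h7 hSAhead_nn]
    rw [← hGsplit]
    linarith
  constructor
  · rw [hG]; linarith
  · rw [hG]; linarith

lemma eps_of_tendsto {f : ℝ → ℝ} {a : ℝ} (h : Tendsto f atTop (nhds a)) {ε : ℝ}
    (hε : 0 < ε) : ∀ᶠ t in atTop, |f t - a| ≤ ε := by
  have h2 := Metric.tendsto_nhds.mp h ε hε
  filter_upwards [h2] with t ht
  rw [Real.dist_eq] at ht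
  exact ht.le


include hω hc hδ hPA in
lemma HH_div_nonneg (u : ℝ) (hu : 0 ≤ u) :
    Tendsto (fun t => HH hfin ω t u / (Wf hfin ω t)^2) atTop
      (nhds (1 - Real.exp (δ * (-u))/2)) := by
  apply tendsto_of_eps
  intro ε hε
  set e1 : ℝ := Real.exp (δ * u) with he1
  set e2 : ℝ := Real.exp (δ * (-u)) with he2
  have he12 : e1 * e2 = 1 := by
    rw [he1, he2, ← Real.exp_add, show δ*u + δ*(-u) = 0 by ring, Real.exp_zero]
  have he2pos : 0 < e2 := Real.exp_pos _
  have he2le : e2 ≤ 1 := by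
    rw [he2]
    rw [Real.exp_le_one_iff]
    nlinarith
  have he1ge : 1 ≤ e1 := by
    rw [he1]
    apply Real.one_le_exp
    positivity
  set η : ℝ := min ε 1 with hηdef
  have hη : 0 < η := lt_min hε one_pos
  have hη_le : η ≤ ε := min_le_left _ _
  have hηe : 0 ≤ e1 - η := by
    have := min_le_right ε 1
    linarith
  have hrat := Wf_ratio hfin ω hc hPA u
  have hratev := eps_of_tendsto hrat hη
  obtain ⟨T₀, hT₀⟩ := eventually_atTop.1 (hratev.and (Wf_pos hfin ω hc hPA))
  have hT₀' : ∀ x ≥ T₀, (e1 - η) * Wf hfin ω x ≤ Wf hfin ω (x+u) ∧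
      Wf hfin ω (x+u) ≤ (e1 + η) * Wf hfin ω x := by
    intro x hx
    obtain ⟨h1, h2⟩ := hT₀ x hx
    rw [abs_le] at h1
    constructor
    · calc (e1 - η) * Wf hfin ω x
          ≤ (Wf hfin ω (x+u) / Wf hfin ω x) * Wf hfin ω x := by
            apply mul_le_mul_of_nonneg_right _ h2.le
            linarith [h1.1]
        _ = Wf hfin ω (x+u) := by field_simp
    · calc Wf hfin ω (x+u) = (Wf hfin ω (x+u) / Wf hfin ω x) * Wf hfin ω x := by field_simp
        _ ≤ (e1 + η) * Wf hfin ω x := by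
            apply mul_le_mul_of_nonneg_right _ h2.le
            linarith [h1.2]
  have hsh : Tendsto (fun t : ℝ => t - u) atTop atTop := by
    simpa [sub_eq_add_neg] using tendsto_atTop_add_const_right atTop (-u) (tendsto_id (α := ℝ))
  have hr : Tendsto (fun t => Wf hfin ω (t-u) / Wf hfin ω t) atTop (nhds e2) := by
    have h := Wf_ratio hfin ω hc hPA (-u)
    rw [he2]
    simpa [sub_eq_add_neg, mul_neg, neg_mul] using h
  have hWpos := Wf_pos hfin ω hc hPA
  have hWpos' : ∀ᶠ t in atTop, 0 < Wf hfin ω (t-u) := hsh.eventually hWpos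
  have hd : Tendsto (fun t => Df hfin ω (t-u) / (Wf hfin ω t)^2) atTop (nhds 0) := by
    have h1 : Tendsto (fun t => Df hfin ω (t-u) / (Wf hfin ω (t-u))^2) atTop (nhds 0) :=
      (Df_div hfin ω hω hc hδ hPA).comp hsh
    have h2 := h1.mul (hr.pow 2)
    rw [zero_mul] at h2
    apply h2.congr'
    filter_upwards [hWpos', hWpos] with t hw1 hw2
    have hne1 : Wf hfin ω (t-u) ≠ 0 := hw1.ne'
    have hne2 : Wf hfin ω t ≠ 0 := hw2.ne'
    field_simp
  have hconst1 : Tendsto (fun t => ((e1 - η) * (Wf hfin ω T₀)^2) / (Wf hfin ω t)^2)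
      atTop (nhds 0) := const_div_Wf_sq hfin ω hc hδ hPA _
  have hconst2 : Tendsto (fun t => (Wf hfin ω T₀ * Wf hfin ω (T₀+u)) / (Wf hfin ω t)^2)
      atTop (nhds 0) := const_div_Wf_sq hfin ω hc hδ hPA _
  have hlo : Tendsto (fun t =>
      (e1 - η) * ((Wf hfin ω (t-u) / Wf hfin ω t)^2 + Df hfin ω (t-u)/(Wf hfin ω t)^2)/2
      - ((e1 - η) * (Wf hfin ω T₀)^2)/(Wf hfin ω t)^2
      + (1 - Wf hfin ω (t-u)/Wf hfin ω t)) atTop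
      (nhds ((e1 - η) * (e2^2 + 0)/2 - 0 + (1 - e2))) :=
    ((((hr.pow 2).add hd).const_mul _).div_const 2).sub hconst1 |>.add
      (tendsto_const_nhds.sub hr)
  have hhi : Tendsto (fun t =>
      (e1 + η) * ((Wf hfin ω (t-u) / Wf hfin ω t)^2 + Df hfin ω (t-u)/(Wf hfin ω t)^2)/2
      + (Wf hfin ω T₀ * Wf hfin ω (T₀+u))/(Wf hfin ω t)^2
      + (1 - Wf hfin ω (t-u)/Wf hfin ω t)) atTop
      (nhds ((e1 + η) * (e2^2 + 0)/2 + 0 + (1 - e2))) :=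
    ((((hr.pow 2).add hd).const_mul _).div_const 2).add hconst2 |>.add
      (tendsto_const_nhds.sub hr)
  have hloL : (e1 - η) * (e2^2 + 0)/2 - 0 + (1 - e2) - (1 - e2/2) = -(η * e2^2)/2 := by
    linear_combination (e2/2) * he12
  have hhiL : (e1 + η) * (e2^2 + 0)/2 + 0 + (1 - e2) - (1 - e2/2) = (η * e2^2)/2 := by
    linear_combination (e2/2) * he12
  have habs : η * e2^2 / 2 ≤ ε/2 := by nlinarith
  filter_upwards [eventually_ge_atTop (T₀ + u), hWpos, hWpos',
    eps_of_tendsto hlo (show (0:ℝ) < ε/2 by linarith),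
    eps_of_tendsto hhi (show (0:ℝ) < ε/2 by linarith)] with t ht hW hw hloε hhiε
  have hWt2 : (0:ℝ) < (Wf hfin ω t)^2 := by positivity
  obtain ⟨hsl, hsu⟩ := HH_sandwich hfin ω hω hu hη.le hηe hT₀' ht
  have hSAeq : SA hfin ω (t-u) = ((Wf hfin ω (t-u))^2 + Df hfin ω (t-u))/2 := by
    linarith [two_SA (hfin := hfin) (ω := ω) (t-u)]
  have hlo_le : (e1 - η) * ((Wf hfin ω (t-u) / Wf hfin ω t)^2 + Df hfin ω (t-u)/(Wf hfin ω t)^2)/2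
      - ((e1 - η) * (Wf hfin ω T₀)^2)/(Wf hfin ω t)^2
      + (1 - Wf hfin ω (t-u)/Wf hfin ω t) ≤ HH hfin ω t u / (Wf hfin ω t)^2 := by
    calc (e1 - η) * ((Wf hfin ω (t-u) / Wf hfin ω t)^2 + Df hfin ω (t-u)/(Wf hfin ω t)^2)/2
        - ((e1 - η) * (Wf hfin ω T₀)^2)/(Wf hfin ω t)^2
        + (1 - Wf hfin ω (t-u)/Wf hfin ω t)
        = ((e1 - η) * (SA hfin ω (t-u) - (Wf hfin ω T₀)^2)
          + Wf hfin ω t * (Wf hfin ω t - Wf hfin ω (t-u))) / (Wf hfin ω t)^2 := by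
          rw [hSAeq]
          field_simp
      _ ≤ HH hfin ω t u / (Wf hfin ω t)^2 := by
          exact (div_le_div_iff_of_pos_right hWt2).mpr hsl
  have hhi_ge : HH hfin ω t u / (Wf hfin ω t)^2 ≤
      (e1 + η) * ((Wf hfin ω (t-u) / Wf hfin ω t)^2 + Df hfin ω (t-u)/(Wf hfin ω t)^2)/2
      + (Wf hfin ω T₀ * Wf hfin ω (T₀+u))/(Wf hfin ω t)^2
      + (1 - Wf hfin ω (t-u)/Wf hfin ω t) := by
    calc HH hfin ω t u / (Wf hfin ω t)^2
        ≤ ((e1 + η) * SA hfin ω (t-u) + Wf hfin ω T₀ * Wf hfin ω (T₀+u)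
          + Wf hfin ω t * (Wf hfin ω t - Wf hfin ω (t-u))) / (Wf hfin ω t)^2 := by
          exact (div_le_div_iff_of_pos_right hWt2).mpr hsu
      _ = (e1 + η) * ((Wf hfin ω (t-u) / Wf hfin ω t)^2 + Df hfin ω (t-u)/(Wf hfin ω t)^2)/2
          + (Wf hfin ω T₀ * Wf hfin ω (T₀+u))/(Wf hfin ω t)^2
          + (1 - Wf hfin ω (t-u)/Wf hfin ω t) := by
          rw [hSAeq]
          field_simp
  rw [abs_le] at hloε hhiε ⊢
  constructor
  · linarith [hloε.1, hloε.2]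
  · linarith [hhiε.1, hhiε.2]


noncomputable def Lfun (δ u : ℝ) : ℝ :=
  if 0 ≤ u then 1 - Real.exp (δ * (-u))/2 else Real.exp (δ * u)/2

lemma Lfun_bounds {δ : ℝ} (hδ : 0 < δ) (u : ℝ) : 0 ≤ Lfun δ u ∧ Lfun δ u ≤ 1 := by
  unfold Lfun
  split_ifs with h
  · have h1 : Real.exp (δ * (-u)) ≤ 1 := by
      rw [Real.exp_le_one_iff]
      nlinarith
    have h2 : 0 < Real.exp (δ * (-u)) := Real.exp_pos _
    constructor <;> linarith
  · push_neg at h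
    have h1 : Real.exp (δ * u) ≤ 1 := by
      rw [Real.exp_le_one_iff]
      nlinarith
    have h2 : 0 < Real.exp (δ * u) := Real.exp_pos _
    constructor <;> linarith

include hω hc hδ hPA in
lemma HH_div (u : ℝ) :
    Tendsto (fun t => HH hfin ω t u / (Wf hfin ω t)^2) atTop (nhds (Lfun δ u)) := by
  rcases le_or_gt 0 u with hu | hu
  · rw [Lfun, if_pos hu]
    exact HH_div_nonneg hfin ω hω hc hδ hPA u hu
  · rw [Lfun, if_neg (not_le.2 hu)]
    apply tendsto_of_eps
    intro ε hε
    set v : ℝ := -u with hvdef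
    have hv : 0 < v := by rw [hvdef]; linarith
    set e' : ℝ := min (v/2) (min (1/δ) (ε/(3*δ))) with he'def
    have he' : 0 < e' := by
      apply lt_min (by linarith)
      apply lt_min (by positivity) (by positivity)
    have he'v : e' ≤ v/2 := min_le_left _ _
    have he'δ : δ * e' ≤ 1 := by
      have h1 : e' ≤ 1/δ := le_trans (min_le_right _ _) (min_le_left _ _)
      rw [← le_div_iff₀' hδ]
      exact h1
    have he'ε : 3 * δ * e' ≤ ε := by
      have h1 : e' ≤ ε/(3*δ) := le_trans (min_le_right _ _) (min_le_right _ _)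
      rw [le_div_iff₀ (by positivity)] at h1
      linarith
    have hexp3 : Real.exp (δ * e') ≤ 3 := by
      calc Real.exp (δ * e') ≤ Real.exp 1 := Real.exp_le_exp.2 he'δ
        _ ≤ 3 := by
          have := Real.exp_one_lt_d9
          linarith
    have hXm1 : Real.exp (δ * e') - 1 ≤ ε := by
      have h1 : 1 - Real.exp (-(δ * e')) ≤ δ * e' := by
        linarith [Real.add_one_le_exp (-(δ * e'))]
      have h2 : Real.exp (δ * e') * Real.exp (-(δ * e')) = 1 := by
        rw [← Real.exp_add]; simp
      nlinarith [Real.exp_pos (δ * e'), he'δ, hδ.le, he'.le]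
    have hd : Real.exp (δ * (-(v - e')))/2 ≤ Real.exp (δ * (-v))/2 + ε/2 := by
      have h1 : Real.exp (δ * (-(v - e'))) = Real.exp (δ * e') * Real.exp (δ * (-v)) := by
        rw [← Real.exp_add]; congr 1; ring
      have h2 : Real.exp (δ * (-v)) ≤ 1 := by
        rw [Real.exp_le_one_iff]; nlinarith
      have h3 : 0 < Real.exp (δ * (-v)) := Real.exp_pos _
      rw [h1]
      nlinarith
    have hA := HH_div_nonneg hfin ω hω hc hδ hPA v hv.le
    have hB := HH_div_nonneg hfin ω hω hc hδ hPA (v - e') (by linarith)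
    filter_upwards [Wf_pos hfin ω hc hPA,
      eps_of_tendsto hA (show (0:ℝ) < ε/2 by linarith),
      eps_of_tendsto hB (show (0:ℝ) < ε/2 by linarith)] with t hW hAe hBe
    have hWt2 : (0:ℝ) < (Wf hfin ω t)^2 := by positivity
    have hcompl : HH hfin ω t u + HHs hfin ω t v = (Wf hfin ω t)^2 := by
      rw [hvdef]; exact HH_compl hfin ω t u
    have hle1 : HHs hfin ω t v ≤ HH hfin ω t v := HHs_le hfin ω hω t v
    have hle2 : HH hfin ω t (v - e') ≤ HHs hfin ω t v := le_HHs hfin ω hω t v e' he'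
    have hdiv1 : HHs hfin ω t v / (Wf hfin ω t)^2 ≤ HH hfin ω t v / (Wf hfin ω t)^2 :=
      (div_le_div_iff_of_pos_right hWt2).mpr hle1
    have hdiv2 : HH hfin ω t (v - e') / (Wf hfin ω t)^2 ≤ HHs hfin ω t v / (Wf hfin ω t)^2 :=
      (div_le_div_iff_of_pos_right hWt2).mpr hle2
    have heq : HH hfin ω t u / (Wf hfin ω t)^2 = 1 - HHs hfin ω t v / (Wf hfin ω t)^2 := by
      have : HH hfin ω t u = (Wf hfin ω t)^2 - HHs hfin ω t v := by linarith
      rw [this, sub_div, div_self hWt2.ne']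
    have huv : Real.exp (δ * u) = Real.exp (δ * (-v)) := by rw [hvdef, neg_neg]
    rw [abs_le] at hAe hBe ⊢
    constructor
    · rw [heq, huv]
      linarith [hAe.2]
    · rw [heq, huv]
      linarith [hBe.1, hd]


end Main

section Integral

lemma ell_cont (δ : ℝ) : Continuous (fun t : ℝ => δ/2 * Real.exp (-δ * |t|)) := by
  apply Continuous.mul continuous_const
  exact Real.continuous_exp.comp (continuous_const.mul continuous_abs)

lemma Lfun_nonpos {δ u : ℝ} (hu : u ≤ 0) : Lfun δ u = Real.exp (δ * u)/2 := by
  rw [Lfun]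
  split_ifs with h
  · have : u = 0 := le_antisymm hu h
    subst this
    norm_num
  · rfl

lemma Lfun_nonneg' {δ u : ℝ} (hu : 0 ≤ u) : Lfun δ u = 1 - Real.exp (-(δ * u))/2 := by
  rw [Lfun, if_pos hu, mul_neg]

lemma integral_ell_neg {δ : ℝ} (hδ : 0 < δ) {p q : ℝ} (hpq : p ≤ q) (hq : q ≤ 0) :
    ∫ t in p..q, (δ/2 * Real.exp (-δ * |t|)) = Real.exp (δ * q)/2 - Real.exp (δ * p)/2 := by
  have hcong : Set.EqOn (fun t : ℝ => δ/2 * Real.exp (-δ * |t|))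
      (fun t : ℝ => δ/2 * Real.exp (δ * t)) (Set.uIcc p q) := by
    intro t ht
    rw [Set.uIcc_of_le hpq] at ht
    have ht0 : t ≤ 0 := le_trans ht.2 hq
    simp only
    rw [abs_of_nonpos ht0]
    ring_nf
  rw [intervalIntegral.integral_congr hcong]
  have key : ∀ r ∈ Set.uIcc p q, HasDerivAt (fun t => Real.exp (δ*t)/2)
      (δ/2 * Real.exp (δ*r)) r := by
    intro r _
    have h1 : HasDerivAt (fun t : ℝ => δ * t) δ r := by
      simpa using (hasDerivAt_id r).const_mul δ
    have h3 := h1.exp.div_const 2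
    rw [show δ/2 * Real.exp (δ*r) = Real.exp (δ*r) * δ / 2 by ring]
    exact h3
  have hcont1 : Continuous (fun t : ℝ => δ/2 * Real.exp (δ * t)) :=
    continuous_const.mul (Real.continuous_exp.comp (continuous_const.mul continuous_id))
  rw [intervalIntegral.integral_eq_sub_of_hasDerivAt key (hcont1.intervalIntegrable p q)]

lemma integral_ell_pos {δ : ℝ} (hδ : 0 < δ) {p q : ℝ} (hpq : p ≤ q) (hp : 0 ≤ p) :
    ∫ t in p..q, (δ/2 * Real.exp (-δ * |t|))
      = Real.exp (-(δ * p))/2 - Real.exp (-(δ * q))/2 := by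
  have hcong : Set.EqOn (fun t : ℝ => δ/2 * Real.exp (-δ * |t|))
      (fun t : ℝ => δ/2 * Real.exp (-(δ * t))) (Set.uIcc p q) := by
    intro t ht
    rw [Set.uIcc_of_le hpq] at ht
    have ht0 : 0 ≤ t := le_trans hp ht.1
    simp only
    rw [abs_of_nonneg ht0]
    ring_nf
  rw [intervalIntegral.integral_congr hcong]
  have key : ∀ r ∈ Set.uIcc p q, HasDerivAt (fun t => -(Real.exp (-(δ*t))/2))
      (δ/2 * Real.exp (-(δ*r))) r := by
    intro r _
    have h1 : HasDerivAt (fun t : ℝ => -(δ * t)) (-δ) r := by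
      simpa [Pi.neg_def] using ((hasDerivAt_id r).const_mul δ).neg
    have h3 := (h1.exp.div_const 2).neg
    rw [show δ/2 * Real.exp (-(δ*r)) = -(Real.exp (-(δ*r)) * -δ / 2) by ring]
    exact h3
  have hcont1 : Continuous (fun t : ℝ => δ/2 * Real.exp (-(δ * t))) :=
    continuous_const.mul (Real.continuous_exp.comp ((continuous_const.mul continuous_id).neg))
  rw [intervalIntegral.integral_eq_sub_of_hasDerivAt key (hcont1.intervalIntegrable p q)]
  ring

lemma integral_ell {δ : ℝ} (hδ : 0 < δ) {p q : ℝ} (hpq : p ≤ q) :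
    ∫ t in p..q, (δ/2 * Real.exp (-δ * |t|)) = Lfun δ q - Lfun δ p := by
  rcases le_or_gt q 0 with hq | hq
  · rw [integral_ell_neg hδ hpq hq, Lfun_nonpos hq, Lfun_nonpos (le_trans hpq hq)]
  · rcases le_or_gt 0 p with hp | hp
    · rw [integral_ell_pos hδ hpq hp, Lfun_nonneg' (le_trans hp hpq), Lfun_nonneg' hp]
      ring
    · have h1 : ∫ t in p..(0:ℝ), (δ/2 * Real.exp (-δ * |t|))
          = Lfun δ 0 - Lfun δ p := by
        rw [integral_ell_neg hδ hp.le le_rfl, Lfun_nonpos (le_refl 0), Lfun_nonpos hp.le]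
      have h2 : ∫ t in (0:ℝ)..q, (δ/2 * Real.exp (-δ * |t|))
          = Lfun δ q - Lfun δ 0 := by
        rw [integral_ell_pos hδ hq.le le_rfl, Lfun_nonneg' hq.le, Lfun_nonneg' (le_refl 0)]
        norm_num
        ring
      have h3 := intervalIntegral.integral_add_adjacent_intervals
        ((ell_cont δ).intervalIntegrable (μ := MeasureTheory.volume) p 0)
        ((ell_cont δ).intervalIntegrable (μ := MeasureTheory.volume) 0 q)
      rw [h1, h2] at h3
      rw [← h3]
      ring

end Integral

section Final
variable {E : Set ℝ} {hfin : ∀ t : ℝ, (E ∩ Set.Iic t).Finite} {ω : ℝ → ℝ}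

noncomputable def Sf (hfin : ∀ t : ℝ, (E ∩ Set.Iic t).Finite) (ω : ℝ → ℝ)
    (t : ℝ) (f : ℝ → ℝ) : ℝ :=
  ∑ x ∈ (hfin t).toFinset, ∑ y ∈ (hfin t).toFinset, ω x * ω y * f (y - x)

lemma Sf_diff_le (hω : ∀ x ∈ E, 0 < ω x) {f g : ℝ → ℝ} {b : ℝ}
    (hfg : ∀ v, |f v - g v| ≤ b) (t : ℝ) :
    |Sf hfin ω t f - Sf hfin ω t g| ≤ b * (Wf hfin ω t)^2 := by
  classical
  have hdiff : Sf hfin ω t f - Sf hfin ω t g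
      = ∑ x ∈ (hfin t).toFinset, ∑ y ∈ (hfin t).toFinset,
        (ω x * ω y * f (y-x) - ω x * ω y * g (y-x)) := by
    rw [Sf, Sf, ← Finset.sum_sub_distrib]
    apply Finset.sum_congr rfl; intro x _
    rw [← Finset.sum_sub_distrib]
  rw [hdiff]
  calc |∑ x ∈ (hfin t).toFinset, ∑ y ∈ (hfin t).toFinset,
        (ω x * ω y * f (y-x) - ω x * ω y * g (y-x))|
      ≤ ∑ x ∈ (hfin t).toFinset, |∑ y ∈ (hfin t).toFinset,
        (ω x * ω y * f (y-x) - ω x * ω y * g (y-x))| := Finset.abs_sum_le_sum_abs _ _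
    _ ≤ ∑ x ∈ (hfin t).toFinset, ∑ y ∈ (hfin t).toFinset, ω x * ω y * b := by
        apply Finset.sum_le_sum; intro x hx
        calc |∑ y ∈ (hfin t).toFinset, (ω x * ω y * f (y-x) - ω x * ω y * g (y-x))|
            ≤ ∑ y ∈ (hfin t).toFinset, |ω x * ω y * f (y-x) - ω x * ω y * g (y-x)| :=
              Finset.abs_sum_le_sum_abs _ _
          _ ≤ ∑ y ∈ (hfin t).toFinset, ω x * ω y * b := by
              apply Finset.sum_le_sum; intro y hy
              have hnn : 0 ≤ ω x * ω y := mul_nonneg (omega_nonneg hfin ω hω hx)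
                (omega_nonneg hfin ω hω hy)
              rw [show ω x * ω y * f (y-x) - ω x * ω y * g (y-x)
                = ω x * ω y * (f (y-x) - g (y-x)) by ring, abs_mul, abs_of_nonneg hnn]
              exact mul_le_mul_of_nonneg_left (hfg (y-x)) hnn
    _ = b * (Wf hfin ω t)^2 := by
        rw [Wf_sq (hfin := hfin) (ω := ω), Finset.mul_sum]
        apply Finset.sum_congr rfl; intro x _
        rw [Finset.mul_sum]
        apply Finset.sum_congr rfl; intro y _
        ring

lemma Sf_step (t : ℝ) (k : ℕ) (a : ℕ → ℝ) (cv : ℕ → ℝ) :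
    Sf hfin ω t (fun v => ∑ j ∈ Finset.range k, cv j *
        ((if v ≤ a (j+1) then (1:ℝ) else 0) - (if v ≤ a j then (1:ℝ) else 0)))
    = ∑ j ∈ Finset.range k, cv j * (HH hfin ω t (a (j+1)) - HH hfin ω t (a j)) := by
  classical
  rw [Sf]
  have h1 : ∀ x ∈ (hfin t).toFinset, ∀ y ∈ (hfin t).toFinset,
      ω x * ω y * (∑ j ∈ Finset.range k, cv j *
        ((if y - x ≤ a (j+1) then (1:ℝ) else 0) - (if y - x ≤ a j then (1:ℝ) else 0)))
      = ∑ j ∈ Finset.range k, cv j *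
        (ω x * ω y * (if y - x ≤ a (j+1) then (1:ℝ) else 0)
          - ω x * ω y * (if y - x ≤ a j then (1:ℝ) else 0)) := by
    intro x _ y _
    rw [Finset.mul_sum]
    apply Finset.sum_congr rfl; intro j _
    ring
  calc (∑ x ∈ (hfin t).toFinset, ∑ y ∈ (hfin t).toFinset,
        ω x * ω y * (∑ j ∈ Finset.range k, cv j *
        ((if y - x ≤ a (j+1) then (1:ℝ) else 0) - (if y - x ≤ a j then (1:ℝ) else 0))))
      = ∑ x ∈ (hfin t).toFinset, ∑ y ∈ (hfin t).toFinset, ∑ j ∈ Finset.range k, cv j *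
        (ω x * ω y * (if y - x ≤ a (j+1) then (1:ℝ) else 0)
          - ω x * ω y * (if y - x ≤ a j then (1:ℝ) else 0)) := by
        apply Finset.sum_congr rfl; intro x hx
        apply Finset.sum_congr rfl; intro y hy
        exact h1 x hx y hy
    _ = ∑ x ∈ (hfin t).toFinset, ∑ j ∈ Finset.range k, ∑ y ∈ (hfin t).toFinset, cv j *
        (ω x * ω y * (if y - x ≤ a (j+1) then (1:ℝ) else 0)
          - ω x * ω y * (if y - x ≤ a j then (1:ℝ) else 0)) := by
        apply Finset.sum_congr rfl; intro x _
        rw [Finset.sum_comm]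
    _ = ∑ j ∈ Finset.range k, ∑ x ∈ (hfin t).toFinset, ∑ y ∈ (hfin t).toFinset, cv j *
        (ω x * ω y * (if y - x ≤ a (j+1) then (1:ℝ) else 0)
          - ω x * ω y * (if y - x ≤ a j then (1:ℝ) else 0)) := by
        rw [Finset.sum_comm]
    _ = ∑ j ∈ Finset.range k, cv j * (HH hfin ω t (a (j+1)) - HH hfin ω t (a j)) := by
        apply Finset.sum_congr rfl; intro j _
        have h2 : ∀ x ∈ (hfin t).toFinset,
            (∑ y ∈ (hfin t).toFinset, cv j *
              (ω x * ω y * (if y - x ≤ a (j+1) then (1:ℝ) else 0)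
                - ω x * ω y * (if y - x ≤ a j then (1:ℝ) else 0)))
            = cv j * ∑ y ∈ (hfin t).toFinset,
              (ω x * ω y * (if y - x ≤ a (j+1) then (1:ℝ) else 0)
                - ω x * ω y * (if y - x ≤ a j then (1:ℝ) else 0)) :=
          fun x _ => (Finset.mul_sum _ _ _).symm
        rw [Finset.sum_congr rfl h2, ← Finset.mul_sum]
        congr 1
        rw [HH, HH, ← Finset.sum_sub_distrib]
        apply Finset.sum_congr rfl; intro x _
        rw [← Finset.sum_sub_distrib]


variable {c δ α : ℝ}

lemma main_real (hω : ∀ x ∈ E, 0 < ω x) (hc : 0 < c) (hδ : 0 < δ)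
    (hPA : Tendsto (fun t : ℝ => Wf hfin ω t / (c * t ^ α * Real.exp (δ * t)))
      atTop (nhds 1))
    (f : ℝ → ℝ) (hf : Continuous f) (hsupp : HasCompactSupport f) :
    Tendsto (fun t : ℝ => Sf hfin ω t f / (Wf hfin ω t)^2) atTop
      (nhds (∫ s : ℝ, f s * (δ/2 * Real.exp (-δ * |s|)))) := by
  classical
  obtain ⟨r0, hr0⟩ := hsupp.isBounded.subset_closedBall 0
  set M : ℝ := max r0 0 with hMdef
  have hM0 : 0 ≤ M := le_max_right _ _
  have hf0 : ∀ v, v ∉ Set.Icc (-M) M → f v = 0 := by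
    intro v hv
    apply image_eq_zero_of_notMem_tsupport
    intro hmem
    apply hv
    have h1 := hr0 hmem
    rw [Metric.mem_closedBall, Real.dist_eq, sub_zero] at h1
    exact abs_le.1 (le_trans h1 (le_max_left _ _))
  have huc := hsupp.uniformContinuous_of_continuous hf
  apply tendsto_of_eps
  intro ε hε
  obtain ⟨r, hr, hucr⟩ := Metric.uniformContinuous_iff.1 huc (ε/5) (by linarith)
  set M' : ℝ := M + 1 with hM'def
  have hM' : 0 < M' := by rw [hM'def]; linarith
  set k : ℕ := ⌈2*M'/r⌉₊ + 1 with hkdef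
  have hk0 : 0 < (k:ℝ) := by
    rw [hkdef]; push_cast; positivity
  set h : ℝ := 2*M'/k with hhdef
  have hh : 0 < h := by rw [hhdef]; positivity
  have hhr : h < r := by
    have h1 : 2*M'/r < (k:ℝ) := by
      calc 2*M'/r ≤ (⌈2*M'/r⌉₊ : ℝ) := Nat.le_ceil _
        _ < k := by rw [hkdef]; push_cast; linarith
    rw [div_lt_iff₀ hr] at h1
    rw [hhdef, div_lt_iff₀ hk0]
    linarith
  set a : ℕ → ℝ := fun i => -M' + i * h with hadef
  have ha0 : a 0 = -M' := by rw [hadef]; simp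
  have hak : a k = M' := by
    rw [hadef]; simp only; rw [hhdef]
    field_simp
    ring
  have hastep : ∀ j : ℕ, a (j+1) - a j = h := by
    intro j; rw [hadef]; simp only; push_cast; ring
  have hamono : ∀ i j : ℕ, i ≤ j → a i ≤ a j := by
    intro i j hij
    rw [hadef]; simp only
    have hcast : (i:ℝ) ≤ j := by exact_mod_cast hij
    nlinarith [hh.le]
  set g : ℝ → ℝ := fun v => ∑ j ∈ Finset.range k, f (a (j+1)) *
    ((if v ≤ a (j+1) then (1:ℝ) else 0) - (if v ≤ a j then (1:ℝ) else 0)) with hgdef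
  have happrox : ∀ v, |f v - g v| ≤ ε/5 := by
    intro v
    rcases le_or_gt v (-M') with hv | hv
    · have hg0 : g v = 0 := by
        rw [hgdef]
        apply Finset.sum_eq_zero
        intro j _
        have h1 : v ≤ a j := le_trans hv (ha0 ▸ hamono 0 j (Nat.zero_le _))
        have h2 : v ≤ a (j+1) := le_trans hv (ha0 ▸ hamono 0 (j+1) (Nat.zero_le _))
        rw [if_pos h1, if_pos h2]; ring
      have hfv : f v = 0 := by
        apply hf0
        intro hmem
        have := hmem.1
        rw [hM'def] at hv
        linarith
      rw [hfv, hg0, sub_zero, abs_zero]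
      linarith
    rcases le_or_gt v M' with hv2 | hv2
    · have htel : ∑ j ∈ Finset.range k,
          ((if v ≤ a (j+1) then (1:ℝ) else 0) - (if v ≤ a j then (1:ℝ) else 0)) = 1 := by
        rw [Finset.sum_range_sub (fun j => if v ≤ a j then (1:ℝ) else 0) k]
        rw [ha0, hak, if_pos hv2, if_neg (not_le.2 hv)]
        ring
      have hfg : f v - g v = ∑ j ∈ Finset.range k, (f v - f (a (j+1))) *
          ((if v ≤ a (j+1) then (1:ℝ) else 0) - (if v ≤ a j then (1:ℝ) else 0)) := by
        have h1 : f v = ∑ j ∈ Finset.range k, f v *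
            ((if v ≤ a (j+1) then (1:ℝ) else 0) - (if v ≤ a j then (1:ℝ) else 0)) := by
          rw [← Finset.mul_sum, htel, mul_one]
        rw [hgdef]
        calc f v - (∑ j ∈ Finset.range k, f (a (j+1)) *
            ((if v ≤ a (j+1) then (1:ℝ) else 0) - (if v ≤ a j then (1:ℝ) else 0)))
            = (∑ j ∈ Finset.range k, f v *
              ((if v ≤ a (j+1) then (1:ℝ) else 0) - (if v ≤ a j then (1:ℝ) else 0)))
              - ∑ j ∈ Finset.range k, f (a (j+1)) *
              ((if v ≤ a (j+1) then (1:ℝ) else 0) - (if v ≤ a j then (1:ℝ) else 0)) := by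
              rw [← h1]
          _ = ∑ j ∈ Finset.range k, (f v - f (a (j+1))) *
              ((if v ≤ a (j+1) then (1:ℝ) else 0) - (if v ≤ a j then (1:ℝ) else 0)) := by
              rw [← Finset.sum_sub_distrib]
              apply Finset.sum_congr rfl; intro j _
              ring
      rw [hfg]
      calc |∑ j ∈ Finset.range k, (f v - f (a (j+1))) *
            ((if v ≤ a (j+1) then (1:ℝ) else 0) - (if v ≤ a j then (1:ℝ) else 0))|
          ≤ ∑ j ∈ Finset.range k, |(f v - f (a (j+1))) *
            ((if v ≤ a (j+1) then (1:ℝ) else 0) - (if v ≤ a j then (1:ℝ) else 0))| :=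
            Finset.abs_sum_le_sum_abs _ _
        _ ≤ ∑ j ∈ Finset.range k, (ε/5) *
            ((if v ≤ a (j+1) then (1:ℝ) else 0) - (if v ≤ a j then (1:ℝ) else 0)) := by
            apply Finset.sum_le_sum
            intro j _
            by_cases hj1 : v ≤ a j
            · have hj2 : v ≤ a (j+1) := le_trans hj1 (hamono j (j+1) (Nat.le_succ _))
              rw [if_pos hj1, if_pos hj2]
              simp
            · by_cases hj2 : v ≤ a (j+1)
              · rw [if_pos hj2, if_neg hj1]
                have hdist : dist v (a (j+1)) < r := by
                  rw [Real.dist_eq, abs_of_nonpos (by linarith : v - a (j+1) ≤ 0)]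
                  have h3 := hastep j
                  push_neg at hj1
                  linarith
                have h4 := hucr hdist
                rw [Real.dist_eq] at h4
                rw [sub_zero, mul_one, mul_one]
                exact h4.le
              · rw [if_neg hj1, if_neg hj2]
                simp
        _ = (ε/5) * ∑ j ∈ Finset.range k,
            ((if v ≤ a (j+1) then (1:ℝ) else 0) - (if v ≤ a j then (1:ℝ) else 0)) := by
            rw [Finset.mul_sum]
        _ = ε/5 := by rw [htel, mul_one]
    · have hg0 : g v = 0 := by
        rw [hgdef]
        apply Finset.sum_eq_zero
        intro j hj
        have hjk : j + 1 ≤ k := Finset.mem_range.1 hj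
        have h1 : ¬ (v ≤ a j) := by
          push_neg
          calc a j ≤ a k := hamono j k (by omega)
            _ = M' := hak
            _ < v := hv2
        have h2 : ¬ (v ≤ a (j+1)) := by
          push_neg
          calc a (j+1) ≤ a k := hamono (j+1) k hjk
            _ = M' := hak
            _ < v := hv2
        rw [if_neg h1, if_neg h2]; ring
      have hfv : f v = 0 := by
        apply hf0
        intro hmem
        have := hmem.2
        rw [hM'def] at hv2
        linarith
      rw [hfv, hg0, sub_zero, abs_zero]
      linarith
  have hQ : Tendsto (fun t => ∑ j ∈ Finset.range k, f (a (j+1)) *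
      (HH hfin ω t (a (j+1)) / (Wf hfin ω t)^2 - HH hfin ω t (a j) / (Wf hfin ω t)^2)) atTop
      (nhds (∑ j ∈ Finset.range k, f (a (j+1)) * (Lfun δ (a (j+1)) - Lfun δ (a j)))) := by
    apply tendsto_finset_sum
    intro j _
    exact ((HH_div hfin ω hω hc hδ hPA (a (j+1))).sub
      (HH_div hfin ω hω hc hδ hPA (a j))).const_mul _
  set Ig : ℝ := ∑ j ∈ Finset.range k, f (a (j+1)) * (Lfun δ (a (j+1)) - Lfun δ (a j))
    with hIgdef
  have hT1 : (∫ s : ℝ, f s * (δ/2 * Real.exp (-δ * |s|)))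
      = ∫ s in (a 0)..(a k), f s * (δ/2 * Real.exp (-δ * |s|)) := by
    have hsub : Function.support (fun s => f s * (δ/2 * Real.exp (-δ * |s|)))
        ⊆ Set.Ioc (a 0) (a k) := by
      intro s hs
      have hfs : f s ≠ 0 := by
        intro h0
        apply hs
        simp [h0]
      have hmem : s ∈ Set.Icc (-M) M := by
        by_contra hmem
        exact hfs (hf0 s hmem)
      rw [ha0, hak, hM'def]
      constructor
      · linarith [hmem.1]
      · linarith [hmem.2]
    rw [intervalIntegral.integral_of_le (by rw [ha0, hak]; linarith)]
    rw [← MeasureTheory.integral_indicator measurableSet_Ioc]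
    congr 1
    exact (Set.indicator_eq_self.2 hsub).symm
  have hint : ∀ j : ℕ, IntervalIntegrable (fun s => f s * (δ/2 * Real.exp (-δ * |s|)))
      MeasureTheory.volume (a j) (a (j+1)) :=
    fun j => (hf.mul (ell_cont δ)).intervalIntegrable _ _
  have hT2 : (∫ s in (a 0)..(a k), f s * (δ/2 * Real.exp (-δ * |s|)))
      = ∑ j ∈ Finset.range k, ∫ s in (a j)..(a (j+1)), f s * (δ/2 * Real.exp (-δ * |s|)) :=
    (intervalIntegral.sum_integral_adjacent_intervals (fun j _ => hint j)).symm
  have hT3 : ∀ j ∈ Finset.range k,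
      |(∫ s in (a j)..(a (j+1)), f s * (δ/2 * Real.exp (-δ * |s|)))
        - f (a (j+1)) * (Lfun δ (a (j+1)) - Lfun δ (a j))|
      ≤ (ε/5) * (Lfun δ (a (j+1)) - Lfun δ (a j)) := by
    intro j _
    have haj : a j ≤ a (j+1) := hamono j (j+1) (Nat.le_succ _)
    have hIg_j : f (a (j+1)) * (Lfun δ (a (j+1)) - Lfun δ (a j))
        = ∫ s in (a j)..(a (j+1)), f (a (j+1)) * (δ/2 * Real.exp (-δ * |s|)) := by
      rw [intervalIntegral.integral_const_mul, integral_ell hδ haj]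
    rw [hIg_j, ← intervalIntegral.integral_sub (g := fun s => f (a (j+1)) * (δ/2 * Real.exp (-δ * |s|))) (hint j)
      ((continuous_const.mul (ell_cont δ)).intervalIntegrable _ _)]
    have hb1 := intervalIntegral.abs_integral_le_integral_abs
      (f := fun s => f s * (δ/2 * Real.exp (-δ * |s|))
        - f (a (j+1)) * (δ/2 * Real.exp (-δ * |s|))) (μ := MeasureTheory.volume) haj
    have hb2 : (∫ s in (a j)..(a (j+1)), |f s * (δ/2 * Real.exp (-δ * |s|))
        - f (a (j+1)) * (δ/2 * Real.exp (-δ * |s|))|)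
        ≤ ∫ s in (a j)..(a (j+1)), (ε/5) * (δ/2 * Real.exp (-δ * |s|)) := by
      apply intervalIntegral.integral_mono_on haj
      · exact ((hf.mul (ell_cont δ)).sub (continuous_const.mul (ell_cont δ))).abs.intervalIntegrable _ _
      · exact (continuous_const.mul (ell_cont δ)).intervalIntegrable _ _
      · intro s hs
        have hdist : dist s (a (j+1)) < r := by
          rw [Real.dist_eq, abs_of_nonpos (by linarith [hs.2] : s - a (j+1) ≤ 0)]
          have h3 := hastep j
          linarith [hs.1]
        have h4 := hucr hdist
        rw [Real.dist_eq] at h4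
        have hl_nn : 0 ≤ δ/2 * Real.exp (-δ * |s|) := by positivity
        calc |f s * (δ/2 * Real.exp (-δ * |s|)) - f (a (j+1)) * (δ/2 * Real.exp (-δ * |s|))|
            = |f s - f (a (j+1))| * (δ/2 * Real.exp (-δ * |s|)) := by
              rw [show f s * (δ/2 * Real.exp (-δ * |s|))
                - f (a (j+1)) * (δ/2 * Real.exp (-δ * |s|))
                = (f s - f (a (j+1))) * (δ/2 * Real.exp (-δ * |s|)) by ring,
                abs_mul, abs_of_nonneg hl_nn]
          _ ≤ (ε/5) * (δ/2 * Real.exp (-δ * |s|)) :=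
              mul_le_mul_of_nonneg_right h4.le hl_nn
    have hb3 : (∫ s in (a j)..(a (j+1)), (ε/5) * (δ/2 * Real.exp (-δ * |s|)))
        = (ε/5) * (Lfun δ (a (j+1)) - Lfun δ (a j)) := by
      rw [intervalIntegral.integral_const_mul, integral_ell hδ haj]
    calc |∫ s in (a j)..(a (j+1)), (f s * (δ/2 * Real.exp (-δ * |s|))
          - f (a (j+1)) * (δ/2 * Real.exp (-δ * |s|)))|
        ≤ ∫ s in (a j)..(a (j+1)), |f s * (δ/2 * Real.exp (-δ * |s|))
          - f (a (j+1)) * (δ/2 * Real.exp (-δ * |s|))| := hb1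
      _ ≤ ∫ s in (a j)..(a (j+1)), (ε/5) * (δ/2 * Real.exp (-δ * |s|)) := hb2
      _ = (ε/5) * (Lfun δ (a (j+1)) - Lfun δ (a j)) := hb3
  have hT4 : |(∫ s : ℝ, f s * (δ/2 * Real.exp (-δ * |s|))) - Ig| ≤ ε/5 := by
    rw [hT1, hT2, hIgdef, ← Finset.sum_sub_distrib]
    calc |∑ j ∈ Finset.range k, ((∫ s in (a j)..(a (j+1)), f s * (δ/2 * Real.exp (-δ * |s|)))
          - f (a (j+1)) * (Lfun δ (a (j+1)) - Lfun δ (a j)))|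
        ≤ ∑ j ∈ Finset.range k, |(∫ s in (a j)..(a (j+1)), f s * (δ/2 * Real.exp (-δ * |s|)))
          - f (a (j+1)) * (Lfun δ (a (j+1)) - Lfun δ (a j))| := Finset.abs_sum_le_sum_abs _ _
      _ ≤ ∑ j ∈ Finset.range k, (ε/5) * (Lfun δ (a (j+1)) - Lfun δ (a j)) :=
          Finset.sum_le_sum hT3
      _ = (ε/5) * ∑ j ∈ Finset.range k, (Lfun δ (a (j+1)) - Lfun δ (a j)) := by
          rw [Finset.mul_sum]
      _ = (ε/5) * (Lfun δ (a k) - Lfun δ (a 0)) := by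
          rw [Finset.sum_range_sub (fun j => Lfun δ (a j)) k]
      _ ≤ ε/5 := by
          have h1 := Lfun_bounds hδ (a k)
          have h2 := Lfun_bounds hδ (a 0)
          nlinarith
  filter_upwards [Wf_pos hfin ω hc hPA,
    eps_of_tendsto hQ (show (0:ℝ) < ε/5 by linarith)] with t hW hQe
  have hWt2 : (0:ℝ) < (Wf hfin ω t)^2 := by positivity
  have h1 : |Sf hfin ω t f / (Wf hfin ω t)^2 - Sf hfin ω t g / (Wf hfin ω t)^2| ≤ ε/5 := by
    rw [div_sub_div_same, abs_div, abs_of_nonneg hWt2.le, div_le_iff₀ hWt2]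
    calc |Sf hfin ω t f - Sf hfin ω t g| ≤ (ε/5) * (Wf hfin ω t)^2 :=
          Sf_diff_le hω happrox t
      _ = ε/5 * (Wf hfin ω t)^2 := rfl
  have h2 : Sf hfin ω t g / (Wf hfin ω t)^2 = ∑ j ∈ Finset.range k, f (a (j+1)) *
      (HH hfin ω t (a (j+1)) / (Wf hfin ω t)^2 - HH hfin ω t (a j) / (Wf hfin ω t)^2) := by
    rw [hgdef]
    rw [Sf_step t k a (fun j => f (a (j+1))), Finset.sum_div]
    apply Finset.sum_congr rfl; intro j _
    rw [mul_div_assoc, sub_div]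
  rw [abs_le] at hQe hT4 h1 ⊢
  rw [h2] at h1
  constructor
  · linarith [hQe.1, hT4.2, h1.1]
  · linarith [hQe.2, hT4.1, h1.2]

end Final
end PCPA

open Filter Real MeasureTheory

/-- Theorem 3.3: under assumption (PA), the renormalised pair correlation measures
(for scaling `ψ = 1`) weak-star converge to `(δ/2) e^{-δ|t|} dt`. -/
theorem pair_correlation_PA
    (E : Set ℝ) (hE : E ⊆ Set.Ici 0) (hfin : ∀ t : ℝ, (E ∩ Set.Iic t).Finite)
    (ω : ℝ → ℝ) (hω : ∀ x ∈ E, 0 < ω x)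
    (c δ α : ℝ) (hc : 0 < c) (hδ : 0 < δ)
    (hPA : Tendsto
      (fun t : ℝ => (∑ x ∈ (hfin t).toFinset, ω x) / (c * t ^ α * Real.exp (δ * t)))
      atTop (nhds 1)) :
    ∀ f : ℝ → ℝ, Continuous f → HasCompactSupport f →
      Tendsto (fun N : ℕ =>
          (∑ x ∈ (hfin N).toFinset, ∑ y ∈ (hfin N).toFinset, ω x * ω y * f (y - x)) /
            (∑ x ∈ (hfin N).toFinset, ω x) ^ 2)
        atTop (nhds (∫ t : ℝ, f t * (δ / 2 * Real.exp (-δ * |t|)))) := by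
  intro f hf hsupp
  have h := PCPA.main_real (hfin := hfin) (ω := ω) hω hc hδ hPA f hf hsupp
  exact h.comp tendsto_natCast_atTop_atTop
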